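/- For n ≥ 6, the subgroup of B_n generated by all elements σ_iσ_j^{−1} with 1 ≤ i, j ≤ n−1 is normal in B_n, and hence equals the commutator subgroup B_n'. -/

import Mathlib

/-- Artin braid relators for the braid group on `n` strands, with generators
`FreeGroup.of i` corresponding to `σ_{i+1}` for `i : Fin (n-1)`. -/
def braidRels (n : ℕ) : Set (FreeGroup (Fin (n - 1))) :=
  {r | ∃ i j : Fin (n - 1),
      ((j : ℕ) ≥ (i : ℕ) + 2 ∧
        r = FreeGroup.of i * FreeGroup.of j * (FreeGroup.of i)⁻¹ * (FreeGroup.of j)⁻¹) ∨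
      ((j : ℕ) = (i : ℕ) + 1 ∧
        r = FreeGroup.of i * FreeGroup.of j * FreeGroup.of i *
          (FreeGroup.of j * FreeGroup.of i * FreeGroup.of j)⁻¹)}

/-- The braid group on `n` strands. -/
def BraidGroup (n : ℕ) : Type := PresentedGroup (braidRels n)

instance (n : ℕ) : Group (BraidGroup n) :=
  inferInstanceAs (Group (PresentedGroup (braidRels n)))

/-- The Artin generator `σ_i` of `BraidGroup n`, for `1 ≤ i ≤ n-1` (junk value `1` otherwise). -/
def σ {n : ℕ} (i : ℕ) : BraidGroup n :=
  if h : 1 ≤ i ∧ i < n then PresentedGroup.of (⟨i - 1, by omega⟩ : Fin (n - 1)) else 1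

/-- The element `α = σ_1 σ_2 ⋯ σ_{n-1}`. -/
def α (n : ℕ) : BraidGroup n := ((List.range (n - 1)).map (fun i => σ (i + 1))).prod

/-- The half-twist `σ_j` for an index `j` taken modulo `n`, defined by conjugating
`σ_1` by the rotation `α`: `σ_{1+m} = α^m σ_1 α^{-m}`. -/
def σm {n : ℕ} (j : ℤ) : BraidGroup n := (α n) ^ (j - 1) * σ 1 * (α n) ^ (1 - j)

lemma rel_one {n : ℕ} {r : FreeGroup (Fin (n-1))} (hr : r ∈ braidRels n) :
    (PresentedGroup.mk (braidRels n) r : BraidGroup n) = 1 := by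
  have : r ∈ Subgroup.normalClosure (braidRels n) := Subgroup.subset_normalClosure hr
  exact (QuotientGroup.eq_one_iff _).mpr this

lemma sigma_comm {n : ℕ} {i j : ℕ} (hi : 1 ≤ i) (hij : i + 2 ≤ j) (hj : j ≤ n - 1) :
    (σ i : BraidGroup n) * σ j = σ j * σ i := by
  have hn : 1 ≤ n - 1 := le_trans (by omega) hj
  have hiI : 1 ≤ i ∧ i < n := ⟨hi, by omega⟩
  have hjI : 1 ≤ j ∧ j < n := ⟨by omega, by omega⟩
  set a : Fin (n-1) := ⟨i - 1, by omega⟩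
  set b : Fin (n-1) := ⟨j - 1, by omega⟩
  have hrel : (FreeGroup.of a * FreeGroup.of b * (FreeGroup.of a)⁻¹ * (FreeGroup.of b)⁻¹ : FreeGroup (Fin (n-1))) ∈ braidRels n := by
    exact ⟨a, b, Or.inl ⟨by simp [a, b]; omega, rfl⟩⟩
  have h1 := rel_one hrel
  have : (PresentedGroup.of a : BraidGroup n) * PresentedGroup.of b * (PresentedGroup.of a)⁻¹ * (PresentedGroup.of b)⁻¹ = 1 := by
    simpa [PresentedGroup.of] using h1
  rw [show (σ i : BraidGroup n) = PresentedGroup.of a from dif_pos hiI,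
    show (σ j : BraidGroup n) = PresentedGroup.of b from dif_pos hjI]
  have h3 := mul_inv_eq_one.mp this
  exact mul_inv_eq_iff_eq_mul.mp h3

lemma sigma_braid {n : ℕ} {i : ℕ} (hi : 1 ≤ i) (hj : i + 1 ≤ n - 1) :
    (σ i : BraidGroup n) * σ (i+1) * σ i = σ (i+1) * σ i * σ (i+1) := by
  have hiI : 1 ≤ i ∧ i < n := ⟨hi, by omega⟩
  have hjI : 1 ≤ i+1 ∧ i+1 < n := ⟨by omega, by omega⟩
  set a : Fin (n-1) := ⟨i - 1, by omega⟩
  set b : Fin (n-1) := ⟨i + 1 - 1, by omega⟩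
  have hrel : (FreeGroup.of a * FreeGroup.of b * FreeGroup.of a *
      (FreeGroup.of b * FreeGroup.of a * FreeGroup.of b)⁻¹ : FreeGroup (Fin (n-1))) ∈ braidRels n :=
    ⟨a, b, Or.inr ⟨by simp [a, b]; omega, rfl⟩⟩
  have h1 := rel_one hrel
  have h2 : (PresentedGroup.of a : BraidGroup n) * PresentedGroup.of b * PresentedGroup.of a *
      (PresentedGroup.of b * PresentedGroup.of a * PresentedGroup.of b)⁻¹ = 1 := by
    simpa [PresentedGroup.of] using h1
  rw [show (σ i : BraidGroup n) = PresentedGroup.of a from dif_pos hiI,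
    show (σ (i+1) : BraidGroup n) = PresentedGroup.of b from dif_pos hjI]
  have := mul_inv_eq_one.mp h2
  exact this

section Main
variable {n : ℕ}

lemma aux1 {G : Type*} [Group G] (a b t s : G) (h1 : t * b = b * t) (h2 : t * a = a * t) :
    b⁻¹ * a * b * s⁻¹ = (t * b⁻¹) * (a * t⁻¹) * (b * s⁻¹) := by
  have c1 : Commute t b := h1
  have c2 : Commute t a := h2
  calc b⁻¹ * a * b * s⁻¹ = (b⁻¹ * t) * (t⁻¹ * a) * (b * s⁻¹) := by group
    _ = (t * b⁻¹) * (a * t⁻¹) * (b * s⁻¹) := by rw [c1.inv_right.eq, c2.inv_left.eq]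

lemma aux2 {G : Type*} [Group G] (u v t s : G) (h1 : t * v = v * t) (h2 : t * u = u * t) :
    v * u * v⁻¹ * s⁻¹ = (v * t⁻¹) * (u * v⁻¹) * (t * s⁻¹) := by
  have c1 : Commute t v := h1
  have c2 : Commute t u := h2
  have c3 : Commute t⁻¹ (v * (u * v⁻¹)) := (c1.mul_right (c2.mul_right c1.inv_right)).inv_left
  calc v * u * v⁻¹ * s⁻¹ = (v * (u * v⁻¹)) * t⁻¹ * (t * s⁻¹) := by group
    _ = t⁻¹ * (v * (u * v⁻¹)) * (t * s⁻¹) := by rw [← c3.eq]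
    _ = ((t⁻¹ * v) * (u * v⁻¹)) * (t * s⁻¹) := by group
    _ = (v * t⁻¹) * (u * v⁻¹) * (t * s⁻¹) := by rw [c1.inv_left.eq]

def SS (n : ℕ) : Set (BraidGroup n) :=
  {x : BraidGroup n | ∃ i j, 1 ≤ i ∧ i ≤ n - 1 ∧ 1 ≤ j ∧ j ≤ n - 1 ∧ x = σ i * (σ j)⁻¹}

lemma mem_SS {i j : ℕ} (hi : 1 ≤ i) (hi' : i ≤ n - 1) (hj : 1 ≤ j) (hj' : j ≤ n - 1) :
    (σ i : BraidGroup n) * (σ j)⁻¹ ∈ Subgroup.closure (SS n) :=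
  Subgroup.subset_closure ⟨i, j, hi, hi', hj, hj', rfl⟩

lemma sigma_comm' {i j : ℕ} (hi : 1 ≤ i) (hi' : i ≤ n - 1) (hj : 1 ≤ j) (hj' : j ≤ n - 1)
    (hij : i + 2 ≤ j ∨ j + 2 ≤ i) : (σ i : BraidGroup n) * σ j = σ j * σ i := by
  rcases hij with h | h
  · exact sigma_comm hi h hj'
  · exact (sigma_comm hj h hi').symm

lemma shape1 (hn : 6 ≤ n) {u v : ℕ} (hu : 1 ≤ u) (hu' : u ≤ n - 1) (hv : 1 ≤ v)
    (hv' : v ≤ n - 1) {t : ℕ} (ht : 1 ≤ t) (ht' : t ≤ n - 1)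
    (h1 : (σ t : BraidGroup n) * σ v = σ v * σ t) (h2 : (σ t : BraidGroup n) * σ u = σ u * σ t) :
    (σ v : BraidGroup n)⁻¹ * σ u * σ v * (σ 1)⁻¹ ∈ Subgroup.closure (SS n) := by
  rw [aux1 (σ u) (σ v) (σ t) (σ 1) h1 h2]
  exact Subgroup.mul_mem _ (Subgroup.mul_mem _ (mem_SS ht ht' hv hv') (mem_SS hu hu' ht ht'))
    (mem_SS hv hv' (by omega) (by omega))

lemma shape2 (hn : 6 ≤ n) {u v : ℕ} (hu : 1 ≤ u) (hu' : u ≤ n - 1) (hv : 1 ≤ v)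
    (hv' : v ≤ n - 1) {t : ℕ} (ht : 1 ≤ t) (ht' : t ≤ n - 1)
    (h1 : (σ t : BraidGroup n) * σ v = σ v * σ t) (h2 : (σ t : BraidGroup n) * σ u = σ u * σ t) :
    (σ v : BraidGroup n) * σ u * (σ v)⁻¹ * (σ 1)⁻¹ ∈ Subgroup.closure (SS n) := by
  rw [aux2 (σ u) (σ v) (σ t) (σ 1) h1 h2]
  exact Subgroup.mul_mem _ (Subgroup.mul_mem _ (mem_SS hv hv' ht ht') (mem_SS hu hu' hv hv'))
    (mem_SS ht ht' (by omega) (by omega))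

end Main

section Conj
variable {n : ℕ}

lemma gaux1 {G : Type*} [Group G] (a b : G) (h : a * b * a = b * a * b) :
    a * b * a⁻¹ = b⁻¹ * a * b := by
  apply mul_inv_eq_iff_eq_mul.mpr
  calc a * b = b⁻¹ * (b * a * b) := by group
    _ = b⁻¹ * (a * b * a) := by rw [h]
    _ = b⁻¹ * a * b * a := by group

lemma gaux2 {G : Type*} [Group G] (a b : G) (h : a * b * a = b * a * b) :
    b * a * b⁻¹ = a⁻¹ * b * a := by
  apply mul_inv_eq_iff_eq_mul.mpr
  calc b * a = a⁻¹ * (a * b * a) := by group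
    _ = a⁻¹ * (b * a * b) := by rw [h]
    _ = a⁻¹ * b * a * b := by group

lemma pick_t (hn : 6 ≤ n) {p : ℕ} (hp : 1 ≤ p) (hp' : p + 1 ≤ n - 1) :
    ∃ t, 1 ≤ t ∧ t ≤ n - 1 ∧ (σ t : BraidGroup n) * σ p = σ p * σ t ∧
      (σ t : BraidGroup n) * σ (p + 1) = σ (p + 1) * σ t := by
  by_cases h3 : 3 ≤ p
  · exact ⟨1, le_refl _, by omega,
      sigma_comm' le_rfl (by omega) hp (by omega) (Or.inl (by omega)),
      sigma_comm' le_rfl (by omega) (by omega) hp' (Or.inl (by omega))⟩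
  · exact ⟨p + 3, by omega, by omega,
      sigma_comm' (by omega) (by omega) hp (by omega) (Or.inr (by omega)),
      sigma_comm' (by omega) (by omega) (by omega) hp' (Or.inr (by omega))⟩

lemma conj_mem (hn : 6 ≤ n) {k i : ℕ} (hk : 1 ≤ k) (hk' : k ≤ n - 1) (hi : 1 ≤ i)
    (hi' : i ≤ n - 1) :
    (σ k : BraidGroup n) * σ i * (σ k)⁻¹ * (σ 1)⁻¹ ∈ Subgroup.closure (SS n) ∧
      (σ k : BraidGroup n)⁻¹ * σ i * σ k * (σ 1)⁻¹ ∈ Subgroup.closure (SS n) := by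
  rcases Nat.lt_trichotomy i k with hlt | heq | hgt
  · rcases Nat.lt_or_ge i (k - 1) with hfar | hadj
    · -- i + 2 ≤ k : far case
      have hc : (σ i : BraidGroup n) * σ k = σ k * σ i :=
        sigma_comm' hi hi' hk hk' (Or.inl (by omega))
      constructor
      · have : (σ k : BraidGroup n) * σ i * (σ k)⁻¹ * (σ 1)⁻¹ = σ i * (σ 1)⁻¹ := by
          rw [← hc]; group
        rw [this]; exact mem_SS hi hi' (by omega) (by omega)
      · have h2 : (σ k : BraidGroup n)⁻¹ * σ i * σ k = σ i := by
          rw [mul_assoc, hc, ← mul_assoc, inv_mul_cancel, one_mul]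
        have : (σ k : BraidGroup n)⁻¹ * σ i * σ k * (σ 1)⁻¹ = σ i * (σ 1)⁻¹ := by rw [h2]
        rw [this]; exact mem_SS hi hi' (by omega) (by omega)
    · -- k = i + 1 : adjacent, i below k
      have hki : k = i + 1 := by omega
      subst hki
      have hrel := sigma_braid hi hk'
      obtain ⟨t, ht, ht', hc1, hc2⟩ := pick_t hn hi hk'
      constructor
      · have e := gaux2 (σ i : BraidGroup n) (σ (i+1)) hrel
        have : (σ (i+1) : BraidGroup n) * σ i * (σ (i+1))⁻¹ * (σ 1)⁻¹ =
            (σ i)⁻¹ * σ (i+1) * σ i * (σ 1)⁻¹ := by rw [e]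
        rw [this]
        exact shape1 hn hk hk' hi hi' ht ht' hc1 hc2
      · have e := (gaux1 (σ i : BraidGroup n) (σ (i+1)) hrel).symm
        have : (σ (i+1) : BraidGroup n)⁻¹ * σ i * σ (i+1) * (σ 1)⁻¹ =
            σ i * σ (i+1) * (σ i)⁻¹ * (σ 1)⁻¹ := by
          rw [show (σ (i+1) : BraidGroup n)⁻¹ * σ i * σ (i+1) = σ i * σ (i+1) * (σ i)⁻¹ by
            rw [← e]]
        rw [this]
        exact shape2 hn hk hk' hi hi' ht ht' hc1 hc2
  · subst heq
    constructor
    · have : (σ i : BraidGroup n) * σ i * (σ i)⁻¹ * (σ 1)⁻¹ = σ i * (σ 1)⁻¹ := by group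
      rw [this]; exact mem_SS hi hi' (by omega) (by omega)
    · have : (σ i : BraidGroup n)⁻¹ * σ i * σ i * (σ 1)⁻¹ = σ i * (σ 1)⁻¹ := by group
      rw [this]; exact mem_SS hi hi' (by omega) (by omega)
  · rcases Nat.lt_or_ge k (i - 1) with hfar | hadj
    · -- k + 2 ≤ i : far case
      have hc : (σ k : BraidGroup n) * σ i = σ i * σ k :=
        sigma_comm' hk hk' hi hi' (Or.inl (by omega))
      constructor
      · have : (σ k : BraidGroup n) * σ i * (σ k)⁻¹ * (σ 1)⁻¹ = σ i * (σ 1)⁻¹ := by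
          rw [hc]; group
        rw [this]; exact mem_SS hi hi' (by omega) (by omega)
      · have h2 : (σ k : BraidGroup n)⁻¹ * σ i * σ k = σ i := by
          rw [mul_assoc, ← hc, ← mul_assoc, inv_mul_cancel, one_mul]
        have : (σ k : BraidGroup n)⁻¹ * σ i * σ k * (σ 1)⁻¹ = σ i * (σ 1)⁻¹ := by rw [h2]
        rw [this]; exact mem_SS hi hi' (by omega) (by omega)
    · -- i = k + 1 : adjacent, i above k
      have hik : i = k + 1 := by omega
      subst hik
      have hrel := sigma_braid hk hi'
      obtain ⟨t, ht, ht', hc1, hc2⟩ := pick_t hn hk hi'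
      constructor
      · have e := gaux1 (σ k : BraidGroup n) (σ (k+1)) hrel
        have : (σ k : BraidGroup n) * σ (k+1) * (σ k)⁻¹ * (σ 1)⁻¹ =
            (σ (k+1))⁻¹ * σ k * σ (k+1) * (σ 1)⁻¹ := by rw [e]
        rw [this]
        exact shape1 hn hk hk' hi hi' ht ht' hc2 hc1
      · have e := (gaux2 (σ k : BraidGroup n) (σ (k+1)) hrel).symm
        have : (σ k : BraidGroup n)⁻¹ * σ (k+1) * σ k * (σ 1)⁻¹ =
            σ (k+1) * σ k * (σ (k+1))⁻¹ * (σ 1)⁻¹ := by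
          rw [show (σ k : BraidGroup n)⁻¹ * σ (k+1) * σ k = σ (k+1) * σ k * (σ (k+1))⁻¹ by
            rw [← e]]
        rw [this]
        exact shape2 hn hk hk' hi hi' ht ht' hc2 hc1

end Conj

section Final
variable {n : ℕ}

lemma sigma_of (j : Fin (n - 1)) : (σ (j.val + 1) : BraidGroup n) = PresentedGroup.of j := by
  have h : 1 ≤ j.val + 1 ∧ j.val + 1 < n := ⟨by omega, by have := j.isLt; omega⟩
  rw [show (σ (j.val + 1) : BraidGroup n) = PresentedGroup.of (⟨j.val + 1 - 1, by have := j.isLt; omega⟩ : Fin (n - 1)) from dif_pos h]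
  exact congrArg PresentedGroup.of (Fin.ext (by simp))

lemma conj_S_mem (hn : 6 ≤ n) {k : ℕ} (hk : 1 ≤ k) (hk' : k ≤ n - 1) {x : BraidGroup n}
    (hx : x ∈ SS n) :
    σ k * x * (σ k)⁻¹ ∈ Subgroup.closure (SS n) ∧
      (σ k)⁻¹ * x * σ k ∈ Subgroup.closure (SS n) := by
  obtain ⟨i, j, hi, hi', hj, hj', rfl⟩ := hx
  obtain ⟨hA1, hA2⟩ := conj_mem hn hk hk' hi hi'
  obtain ⟨hB1, hB2⟩ := conj_mem hn hk hk' hj hj'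
  constructor
  · have e : (σ k : BraidGroup n) * (σ i * (σ j)⁻¹) * (σ k)⁻¹ =
        (σ k * σ i * (σ k)⁻¹ * (σ 1)⁻¹) * (σ k * σ j * (σ k)⁻¹ * (σ 1)⁻¹)⁻¹ := by group
    rw [e]; exact Subgroup.mul_mem _ hA1 (Subgroup.inv_mem _ hB1)
  · have e : (σ k : BraidGroup n)⁻¹ * (σ i * (σ j)⁻¹) * σ k =
        ((σ k)⁻¹ * σ i * σ k * (σ 1)⁻¹) * ((σ k)⁻¹ * σ j * σ k * (σ 1)⁻¹)⁻¹ := by group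
    rw [e]; exact Subgroup.mul_mem _ hA2 (Subgroup.inv_mem _ hB2)

lemma conj_H_mem (hn : 6 ≤ n) {k : ℕ} (hk : 1 ≤ k) (hk' : k ≤ n - 1) {h : BraidGroup n}
    (hh : h ∈ Subgroup.closure (SS n)) :
    σ k * h * (σ k)⁻¹ ∈ Subgroup.closure (SS n) ∧
      (σ k)⁻¹ * h * σ k ∈ Subgroup.closure (SS n) := by
  induction hh using Subgroup.closure_induction with
  | mem x hx => exact conj_S_mem hn hk hk' hx
  | one => constructor <;> simpa using Subgroup.one_mem _
  | mul x y hx hy ihx ihy =>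
    constructor
    · have e : σ k * (x * y) * (σ k)⁻¹ = (σ k * x * (σ k)⁻¹) * (σ k * y * (σ k)⁻¹) := by group
      rw [e]; exact Subgroup.mul_mem _ ihx.1 ihy.1
    · have e : (σ k)⁻¹ * (x * y) * σ k = ((σ k)⁻¹ * x * σ k) * ((σ k)⁻¹ * y * σ k) := by group
      rw [e]; exact Subgroup.mul_mem _ ihx.2 ihy.2
  | inv x hx ih =>
    constructor
    · have e : σ k * x⁻¹ * (σ k)⁻¹ = (σ k * x * (σ k)⁻¹)⁻¹ := by group
      rw [e]; exact Subgroup.inv_mem _ ih.1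
    · have e : (σ k)⁻¹ * x⁻¹ * σ k = ((σ k)⁻¹ * x * σ k)⁻¹ := by group
      rw [e]; exact Subgroup.inv_mem _ ih.2

lemma sigma_mem_normalizer (hn : 6 ≤ n) {k : ℕ} (hk : 1 ≤ k) (hk' : k ≤ n - 1) :
    (σ k : BraidGroup n) ∈ Subgroup.normalizer (Subgroup.closure (SS n) : Set (BraidGroup n)) := by
  rw [Subgroup.mem_normalizer_iff]
  intro h
  constructor
  · intro hh; exact (conj_H_mem hn hk hk' hh).1
  · intro hh
    have := (conj_H_mem hn hk hk' hh).2
    have e : (σ k : BraidGroup n)⁻¹ * (σ k * h * (σ k)⁻¹) * σ k = h := by group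
    rwa [e] at this

lemma H_normal (hn : 6 ≤ n) : (Subgroup.closure (SS n)).Normal := by
  rw [← Subgroup.normalizer_eq_top_iff, Subgroup.eq_top_iff']
  intro x
  refine PresentedGroup.generated_by (braidRels n) _ (fun j => ?_) x
  have hk : 1 ≤ j.val + 1 := by omega
  have hk' : j.val + 1 ≤ n - 1 := by have := j.isLt; omega
  have h2 := sigma_mem_normalizer hn hk hk'
  rwa [sigma_of j] at h2

lemma ab_adj {p : ℕ} (hp : 1 ≤ p) (hp' : p + 1 ≤ n - 1) :
    Abelianization.of (σ p : BraidGroup n) = Abelianization.of (σ (p + 1)) := by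
  have h := congrArg (Abelianization.of (G := BraidGroup n)) (sigma_braid hp hp')
  simp only [map_mul] at h
  set a := Abelianization.of (σ p : BraidGroup n)
  set b := Abelianization.of (σ (p+1) : BraidGroup n)
  rw [mul_comm b a] at h
  -- h : a * b * a = a * b * b
  exact mul_left_cancel h

lemma ab_eq_one {i : ℕ} (hi : 1 ≤ i) (hi' : i ≤ n - 1) :
    Abelianization.of (σ i : BraidGroup n) = Abelianization.of (σ 1) := by
  induction i with
  | zero => omega
  | succ m ih =>
    rcases Nat.eq_or_lt_of_le hi with h1 | h1
    · rw [← h1]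
    · have hm : 1 ≤ m := by omega
      rw [← ab_adj hm hi']
      exact ih hm (by omega)

lemma H_le_commutator : Subgroup.closure (SS n) ≤ commutator (BraidGroup n) := by
  rw [Subgroup.closure_le]
  rintro x ⟨i, j, hi, hi', hj, hj', rfl⟩
  have h : Abelianization.of ((σ i : BraidGroup n) * (σ j)⁻¹) = 1 := by
    rw [map_mul, map_inv, ab_eq_one hi hi', ab_eq_one hj hj', mul_inv_cancel]
  exact (QuotientGroup.eq_one_iff _).mp h

open scoped commutatorElement in
lemma commutator_le_H (hn : 6 ≤ n) :
    commutator (BraidGroup n) ≤ Subgroup.closure (SS n) := by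
  haveI : (Subgroup.closure (SS n)).Normal := H_normal hn
  set H := Subgroup.closure (SS n)
  set π := QuotientGroup.mk' H
  have hz : ∀ x : BraidGroup n, π x ∈ Subgroup.zpowers (π (σ 1)) := by
    intro x
    refine PresentedGroup.generated_by (braidRels n)
      ((Subgroup.zpowers (π (σ 1))).comap π) (fun j => ?_) x
    have hk : 1 ≤ j.val + 1 := by omega
    have hk' : j.val + 1 ≤ n - 1 := by have := j.isLt; omega
    have hmem : (σ (j.val + 1) : BraidGroup n) * (σ 1)⁻¹ ∈ H :=
      mem_SS hk hk' (by omega) (by omega)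
    have : π (σ (j.val + 1)) = π (σ 1) := by
      have h1 : π ((σ (j.val + 1) : BraidGroup n) * (σ 1)⁻¹) = 1 :=
        (QuotientGroup.eq_one_iff _).mpr hmem
      rw [map_mul, map_inv, mul_inv_eq_one] at h1
      exact h1
    have h2 : (σ (j.val + 1) : BraidGroup n) ∈ (Subgroup.zpowers (π (σ 1))).comap π := by
      rw [Subgroup.mem_comap, this]
      exact Subgroup.mem_zpowers _
    rwa [sigma_of j] at h2
  rw [commutator_def, Subgroup.commutator_le]
  intro g _ h _
  have hg := hz g
  have hh := hz h
  obtain ⟨a, ha⟩ := hg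
  obtain ⟨b, hb⟩ := hh
  have hcomm : π g * π h = π h * π g := by
    rw [← ha, ← hb]
    exact (Commute.zpow_zpow (Commute.refl _) a b).eq
  have h1 : π ⁅g, h⁆ = 1 := by
    rw [map_commutatorElement]
    exact commutatorElement_eq_one_iff_mul_comm.mpr hcomm
  exact (QuotientGroup.eq_one_iff _).mp h1

end Final

theorem closure_sigma_diffs_normal (n : ℕ) (hn : 6 ≤ n) :
    (Subgroup.closure {x : BraidGroup n |
        ∃ i j, 1 ≤ i ∧ i ≤ n - 1 ∧ 1 ≤ j ∧ j ≤ n - 1 ∧ x = σ i * (σ j)⁻¹}).Normal ∧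
      Subgroup.closure {x : BraidGroup n |
        ∃ i j, 1 ≤ i ∧ i ≤ n - 1 ∧ 1 ≤ j ∧ j ≤ n - 1 ∧ x = σ i * (σ j)⁻¹} =
        commutator (BraidGroup n) := by
  exact ⟨H_normal hn, le_antisymm H_le_commutator (commutator_le_H hn)⟩
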